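/- arXiv:2002.07944 — 2 statements merged into one kernel-verified Lean document; each statement's English description precedes it below -/
import Mathlib

section
/- If A ∧ B ≡ C ⇒ D, where ≡ is the congruence generated by the distributivity isomorphism, then there exist types D₁, D₂ with D ≡ D₁ ∧ D₂, A ≡ C ⇒ D₁, and B ≡ C ⇒ D₂. -/
inductive Tm : Type
| var : ℕ → Tm
| lam : Tm → Tm
| app : Tm → Tm → Tm
| pair : Tm → Tm → Tm
| p1 : Tm → Tm
| p2 : Tm → Tm

namespace Tm

/-- Renaming of de Bruijn indices. -/
def rename (f : ℕ → ℕ) : Tm → Tm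
| var n => var (f n)
| lam t => lam (t.rename (fun n => match n with | 0 => 0 | n+1 => f n + 1))
| app t s => app (t.rename f) (s.rename f)
| pair t s => pair (t.rename f) (s.rename f)
| p1 t => p1 (t.rename f)
| p2 t => p2 (t.rename f)

/-- Capture-avoiding simultaneous substitution. -/
def subst (σ : ℕ → Tm) : Tm → Tm
| var n => σ n
| lam t => lam (t.subst (fun n => match n with | 0 => var 0 | n+1 => (σ n).rename Nat.succ))
| app t s => app (t.subst σ) (s.subst σ)
| pair t s => pair (t.subst σ) (s.subst σ)
| p1 t => p1 (t.subst σ)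
| p2 t => p2 (t.subst σ)

/-- Substitution of the single (outermost) free variable: t[x := s]. -/
def subst1 (t s : Tm) : Tm :=
  t.subst (fun n => match n with | 0 => s | n+1 => var n)

/-- One-step reduction of the distributive λ-calculus. -/
inductive Step : Tm → Tm → Prop
| beta (t s) : Step (app (lam t) s) (t.subst1 s)
| proj1 (t1 t2) : Step (p1 (pair t1 t2)) t1
| proj2 (t1 t2) : Step (p2 (pair t1 t2)) t2
| pairApp (t s u) : Step (app (pair t s) u) (pair (app t u) (app s u))
| projLam1 (t) : Step (p1 (lam t)) (lam (p1 t))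
| projLam2 (t) : Step (p2 (lam t)) (lam (p2 t))
| lam_cong {t t'} : Step t t' → Step (lam t) (lam t')
| appL {t t' s} : Step t t' → Step (app t s) (app t' s)
| appR {t s s'} : Step s s' → Step (app t s) (app t s')
| pairL {t t' s} : Step t t' → Step (pair t s) (pair t' s)
| pairR {t s s'} : Step s s' → Step (pair t s) (pair t s')
| p1_cong {t t'} : Step t t' → Step (p1 t) (p1 t')
| p2_cong {t t'} : Step t t' → Step (p2 t) (p2 t')

/-- Many-step reduction. -/
def Steps : Tm → Tm → Prop := Relation.ReflTransGen Step

/-- A term is normal when no rule applies anywhere in it. -/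
def Normal (t : Tm) : Prop := ¬ ∃ s, Step t s

/-- All free variables are < k. -/
def closedUnder : ℕ → Tm → Prop
| k, var n => n < k
| k, lam t => closedUnder (k+1) t
| k, app t s => closedUnder k t ∧ closedUnder k s
| k, pair t s => closedUnder k t ∧ closedUnder k s
| k, p1 t => closedUnder k t
| k, p2 t => closedUnder k t

def Closed (t : Tm) : Prop := closedUnder 0 t

/-- Values: variables, abstractions, pairs. -/
def IsValue : Tm → Prop
| var _ => True
| lam _ => True
| pair _ _ => True
| _ => False

/-- Neutral terms: variables, applications, projections. -/
def Neutral : Tm → Prop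
| var _ => True
| app _ _ => True
| p1 _ => True
| p2 _ => True
| _ => False

/-- Strong normalization: every reduction sequence is finite. -/
def SN (t : Tm) : Prop := Acc (fun a b => Step b a) t

end Tm

inductive Ty : Type
| base : Ty
| arr : Ty → Ty → Ty
| conj : Ty → Ty → Ty

/-- The least congruence containing distributivity A ⇒ (B ∧ C) ≡ (A ⇒ B) ∧ (A ⇒ C). -/
inductive Iso : Ty → Ty → Prop
| refl (A) : Iso A A
| symm {A B} : Iso A B → Iso B A
| trans {A B C} : Iso A B → Iso B C → Iso A C
| distr (A B C) : Iso (Ty.arr A (Ty.conj B C)) (Ty.conj (Ty.arr A B) (Ty.arr A C))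
| arrL {A C} (B) : Iso A C → Iso (Ty.arr A B) (Ty.arr C B)
| arrR {B C} (A) : Iso B C → Iso (Ty.arr A B) (Ty.arr A C)
| conjL {A C} (B) : Iso A C → Iso (Ty.conj A B) (Ty.conj C B)
| conjR {B C} (A) : Iso B C → Iso (Ty.conj A B) (Ty.conj A C)

/-- Typing, with contexts as lists of types (de Bruijn), including the conversion rule for ≡. -/
inductive Typing : List Ty → Tm → Ty → Prop
| var {Γ n A} : Γ[n]? = some A → Typing Γ (Tm.var n) A
| lam {Γ t A B} : Typing (A :: Γ) t B → Typing Γ (Tm.lam t) (Ty.arr A B)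
| app {Γ t s A B} : Typing Γ t (Ty.arr A B) → Typing Γ s A → Typing Γ (Tm.app t s) B
| pair {Γ t s A B} : Typing Γ t A → Typing Γ s B → Typing Γ (Tm.pair t s) (Ty.conj A B)
| p1 {Γ t A B} : Typing Γ t (Ty.conj A B) → Typing Γ (Tm.p1 t) A
| p2 {Γ t A B} : Typing Γ t (Ty.conj A B) → Typing Γ (Tm.p2 t) B
| iso {Γ t A B} : Typing Γ t A → Iso A B → Typing Γ t B

/-- Reducibility interpretation of types. -/
def Red : Ty → Tm → Prop
| Ty.base, t => Tm.SN t
| Ty.arr A B, t => ∀ s, Red A s → Red B (Tm.app t s)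
| Ty.conj A B, t => Red A (Tm.p1 t) ∧ Red B (Tm.p2 t)

/-- Binary trees of (prime) types: the conjunction skeleton. -/
inductive TTree : Type
| leaf : Ty → TTree
| node : TTree → TTree → TTree

namespace TTree

def mapT (f : Ty → Ty) : TTree → TTree
| leaf p => leaf (f p)
| node l r => node (mapT f l) (mapT f r)

def ofT : TTree → Ty
| leaf p => p
| node l r => Ty.conj (ofT l) (ofT r)

end TTree

/-- Normal form: push arrows inside conjunctions. -/
def nf : Ty → TTree
| Ty.base => TTree.leaf Ty.base
| Ty.conj A B => TTree.node (nf A) (nf B)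
| Ty.arr A B => TTree.mapT (fun p => Ty.arr A p) (nf B)

/-- Pointwise Iso on trees of the same shape. -/
inductive TRel : TTree → TTree → Prop
| leaf {p q} : Iso p q → TRel (TTree.leaf p) (TTree.leaf q)
| node {l l' r r'} : TRel l l' → TRel r r' → TRel (TTree.node l r) (TTree.node l' r')

theorem TRel.refl : ∀ t, TRel t t
| TTree.leaf p => TRel.leaf (Iso.refl p)
| TTree.node l r => TRel.node (TRel.refl l) (TRel.refl r)

theorem TRel.symm' {t t'} (h : TRel t t') : TRel t' t := by
  induction h with
  | leaf h => exact TRel.leaf h.symm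
  | node _ _ ihl ihr => exact TRel.node ihl ihr

theorem TRel.trans' {t₁ t₂ t₃} (h : TRel t₁ t₂) (h' : TRel t₂ t₃) : TRel t₁ t₃ := by
  induction h generalizing t₃ with
  | leaf h => cases h' with | leaf h' => exact TRel.leaf (h.trans h')
  | node _ _ ihl ihr => cases h' with | node hl hr => exact TRel.node (ihl hl) (ihr hr)

theorem TRel.mapT_arrL {A C} (h : Iso A C) : ∀ t, TRel (TTree.mapT (fun p => Ty.arr A p) t) (TTree.mapT (fun p => Ty.arr C p) t)
| TTree.leaf p => TRel.leaf (Iso.arrL p h)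
| TTree.node l r => TRel.node (TRel.mapT_arrL h l) (TRel.mapT_arrL h r)

theorem TRel.mapT_arrR {A t t'} (h : TRel t t') :
    TRel (TTree.mapT (fun p => Ty.arr A p) t) (TTree.mapT (fun p => Ty.arr A p) t') := by
  induction h with
  | leaf h => exact TRel.leaf (Iso.arrR A h)
  | node _ _ ihl ihr => exact TRel.node ihl ihr

theorem nf_iso {A B} (h : Iso A B) : TRel (nf A) (nf B) := by
  induction h with
  | refl A => exact TRel.refl _
  | symm _ ih => exact ih.symm'
  | trans _ _ ih ih' => exact ih.trans' ih'
  | distr A B C => exact TRel.refl _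
  | arrL B h _ => exact TRel.mapT_arrL h (nf B)
  | arrR A _ ih => exact TRel.mapT_arrR ih
  | conjL B _ ih => exact TRel.node ih (TRel.refl _)
  | conjR A _ ih => exact TRel.node (TRel.refl _) ih

theorem iso_arr_ofT (A : Ty) : ∀ t, Iso (Ty.arr A (TTree.ofT t)) (TTree.ofT (TTree.mapT (fun p => Ty.arr A p) t))
| TTree.leaf p => Iso.refl _
| TTree.node l r =>
    (Iso.distr A (TTree.ofT l) (TTree.ofT r)).trans
      ((Iso.conjL _ (iso_arr_ofT A l)).trans (Iso.conjR _ (iso_arr_ofT A r)))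

theorem iso_nf : ∀ A, Iso A (TTree.ofT (nf A))
| Ty.base => Iso.refl _
| Ty.conj A B => (Iso.conjL _ (iso_nf A)).trans (Iso.conjR _ (iso_nf B))
| Ty.arr A B => (Iso.arrR A (iso_nf B)).trans (iso_arr_ofT A (nf B))

theorem ofT_trel {t t'} (h : TRel t t') : Iso (TTree.ofT t) (TTree.ofT t') := by
  induction h with
  | leaf h => exact h
  | node _ _ ihl ihr => exact (Iso.conjL _ ihl).trans (Iso.conjR _ ihr)

theorem iso_conj_arr (A B C D : Ty) (h : Iso (Ty.conj A B) (Ty.arr C D)) :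
    ∃ D₁ D₂, Iso D (Ty.conj D₁ D₂) ∧ Iso A (Ty.arr C D₁) ∧ Iso B (Ty.arr C D₂) := by
  have h1 := nf_iso h
  simp only [nf] at h1
  -- nf (arr C D) = mapT (arr C) (nf D); it must be a node, so nf D is a node.
  cases hD : nf D with
  | leaf p =>
      rw [hD] at h1
      simp only [TTree.mapT] at h1
      cases h1
  | node d₁ d₂ =>
      rw [hD] at h1
      simp only [TTree.mapT] at h1
      cases h1 with
      | node hA hB =>
        refine ⟨TTree.ofT d₁, TTree.ofT d₂, ?_, ?_, ?_⟩
        · have := iso_nf D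
          rw [hD] at this
          exact this
        · exact ((iso_nf A).trans (ofT_trel hA)).trans (iso_arr_ofT C d₁).symm
        · exact ((iso_nf B).trans (ofT_trel hB)).trans (iso_arr_ofT C d₂).symm
end

section
/- Stability of the interpretation under distributivity: ⟦A ⇒ (B₁ ∧ B₂)⟧ = ⟦(A ⇒ B₁) ∧ (A ⇒ B₂)⟧; more generally, if A ≡ B (the congruence generated by the distributivity isomorphism), then ⟦A⟧ = ⟦B⟧. -/
namespace Tm

/-- lift of a renaming -/
def liftR (f : ℕ → ℕ) : ℕ → ℕ := fun n => match n with | 0 => 0 | n+1 => f n + 1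

/-- lift of a substitution -/
def liftS (σ : ℕ → Tm) : ℕ → Tm :=
  fun n => match n with | 0 => var 0 | n+1 => (σ n).rename Nat.succ

lemma rename_def (f : ℕ → ℕ) (t : Tm) :
    rename f t = match t with
      | var n => var (f n)
      | lam t => lam (t.rename (liftR f))
      | app t s => app (t.rename f) (s.rename f)
      | pair t s => pair (t.rename f) (s.rename f)
      | p1 t => p1 (t.rename f)
      | p2 t => p2 (t.rename f) := by
  cases t <;> rfl

lemma subst_def (σ : ℕ → Tm) (t : Tm) :
    subst σ t = match t with
      | var n => σ n
      | lam t => lam (t.subst (liftS σ))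
      | app t s => app (t.subst σ) (s.subst σ)
      | pair t s => pair (t.subst σ) (s.subst σ)
      | p1 t => p1 (t.subst σ)
      | p2 t => p2 (t.subst σ) := by
  cases t <;> rfl

lemma rename_congr {f g : ℕ → ℕ} (h : ∀ n, f n = g n) (t : Tm) :
    rename f t = rename g t := by
  induction t generalizing f g with
  | var n => exact congrArg var (h n)
  | lam t ih => exact congrArg lam (ih (fun n => by cases n <;> simp [h]))
  | app t s iht ihs => exact congrArg₂ app (iht h) (ihs h)
  | pair t s iht ihs => exact congrArg₂ pair (iht h) (ihs h)
  | p1 t ih => exact congrArg p1 (ih h)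
  | p2 t ih => exact congrArg p2 (ih h)

lemma subst_congr {σ τ : ℕ → Tm} (h : ∀ n, σ n = τ n) (t : Tm) :
    subst σ t = subst τ t := by
  induction t generalizing σ τ with
  | var n => exact h n
  | lam t ih => exact congrArg lam (ih (fun n => by cases n <;> simp [h]))
  | app t s iht ihs => exact congrArg₂ app (iht h) (ihs h)
  | pair t s iht ihs => exact congrArg₂ pair (iht h) (ihs h)
  | p1 t ih => exact congrArg p1 (ih h)
  | p2 t ih => exact congrArg p2 (ih h)

lemma rename_rename (f g : ℕ → ℕ) (t : Tm) :
    rename f (rename g t) = rename (fun n => f (g n)) t := by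
  induction t generalizing f g with
  | var n => rfl
  | lam t ih =>
      refine congrArg lam ?_
      rw [ih]
      exact rename_congr (fun n => by cases n <;> rfl) t
  | app t s iht ihs => exact congrArg₂ app (iht _ _) (ihs _ _)
  | pair t s iht ihs => exact congrArg₂ pair (iht _ _) (ihs _ _)
  | p1 t ih => exact congrArg p1 (ih _ _)
  | p2 t ih => exact congrArg p2 (ih _ _)

lemma subst_rename (σ : ℕ → Tm) (f : ℕ → ℕ) (t : Tm) :
    subst σ (rename f t) = subst (fun n => σ (f n)) t := by
  induction t generalizing σ f with
  | var n => rfl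
  | lam t ih =>
      refine congrArg lam ?_
      rw [ih]
      exact subst_congr (fun n => by cases n <;> rfl) t
  | app t s iht ihs => exact congrArg₂ app (iht _ _) (ihs _ _)
  | pair t s iht ihs => exact congrArg₂ pair (iht _ _) (ihs _ _)
  | p1 t ih => exact congrArg p1 (ih _ _)
  | p2 t ih => exact congrArg p2 (ih _ _)

lemma rename_subst (f : ℕ → ℕ) (σ : ℕ → Tm) (t : Tm) :
    rename f (subst σ t) = subst (fun n => rename f (σ n)) t := by
  induction t generalizing σ f with
  | var n => rfl
  | lam t ih =>
      refine congrArg lam ?_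
      rw [ih]
      refine subst_congr (fun n => ?_) t
      cases n with
      | zero => rfl
      | succ n =>
          show rename (liftR f) (rename Nat.succ (σ n)) = rename Nat.succ (rename f (σ n))
          rw [rename_rename, rename_rename]
          rfl
  | app t s iht ihs => exact congrArg₂ app (iht _ _) (ihs _ _)
  | pair t s iht ihs => exact congrArg₂ pair (iht _ _) (ihs _ _)
  | p1 t ih => exact congrArg p1 (ih _ _)
  | p2 t ih => exact congrArg p2 (ih _ _)

lemma subst_subst (σ τ : ℕ → Tm) (t : Tm) :
    subst σ (subst τ t) = subst (fun n => subst σ (τ n)) t := by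
  induction t generalizing σ τ with
  | var n => rfl
  | lam t ih =>
      refine congrArg lam ?_
      rw [ih]
      refine subst_congr (fun n => ?_) t
      cases n with
      | zero => rfl
      | succ n =>
          show subst (liftS σ) (rename Nat.succ (τ n)) = rename Nat.succ (subst σ (τ n))
          rw [subst_rename, rename_subst]
          rfl
  | app t s iht ihs => exact congrArg₂ app (iht _ _) (ihs _ _)
  | pair t s iht ihs => exact congrArg₂ pair (iht _ _) (ihs _ _)
  | p1 t ih => exact congrArg p1 (ih _ _)
  | p2 t ih => exact congrArg p2 (ih _ _)

lemma subst_var (t : Tm) : subst var t = t := by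
  induction t with
  | var n => rfl
  | lam t ih =>
      refine congrArg lam ?_
      rw [subst_congr (τ := var) (fun n => by cases n <;> rfl) t, ih]
  | app t s iht ihs => exact congrArg₂ app iht ihs
  | pair t s iht ihs => exact congrArg₂ pair iht ihs
  | p1 t ih => exact congrArg p1 ih
  | p2 t ih => exact congrArg p2 ih

lemma rename_subst1 (f : ℕ → ℕ) (t s : Tm) :
    rename f (t.subst1 s) = (rename (liftR f) t).subst1 (rename f s) := by
  unfold subst1
  rw [rename_subst, subst_rename]
  refine subst_congr (fun n => ?_) t
  cases n <;> rfl

lemma subst_subst1 (σ : ℕ → Tm) (t s : Tm) :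
    subst σ (t.subst1 s) = (subst (liftS σ) t).subst1 (subst σ s) := by
  unfold subst1
  rw [subst_subst, subst_subst]
  refine subst_congr (fun n => ?_) t
  cases n with
  | zero => rfl
  | succ n =>
      show σ n = subst _ (rename Nat.succ (σ n))
      rw [subst_rename]
      exact ((subst_congr (fun m => rfl) (σ n)).trans (subst_var (σ n))).symm

lemma step_rename {t t' : Tm} (h : Step t t') (f : ℕ → ℕ) :
    Step (rename f t) (rename f t') := by
  induction h generalizing f with
  | beta t s => rw [rename_subst1]; exact Step.beta _ _
  | proj1 t1 t2 => exact Step.proj1 _ _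
  | proj2 t1 t2 => exact Step.proj2 _ _
  | pairApp t s u => exact Step.pairApp _ _ _
  | projLam1 t => exact Step.projLam1 _
  | projLam2 t => exact Step.projLam2 _
  | lam_cong _ ih => exact Step.lam_cong (ih _)
  | appL _ ih => exact Step.appL (ih _)
  | appR _ ih => exact Step.appR (ih _)
  | pairL _ ih => exact Step.pairL (ih _)
  | pairR _ ih => exact Step.pairR (ih _)
  | p1_cong _ ih => exact Step.p1_cong (ih _)
  | p2_cong _ ih => exact Step.p2_cong (ih _)

lemma step_subst {t t' : Tm} (h : Step t t') (σ : ℕ → Tm) :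
    Step (subst σ t) (subst σ t') := by
  induction h generalizing σ with
  | beta t s => rw [subst_subst1]; exact Step.beta _ _
  | proj1 t1 t2 => exact Step.proj1 _ _
  | proj2 t1 t2 => exact Step.proj2 _ _
  | pairApp t s u => exact Step.pairApp _ _ _
  | projLam1 t => exact Step.projLam1 _
  | projLam2 t => exact Step.projLam2 _
  | lam_cong _ ih => exact Step.lam_cong (ih _)
  | appL _ ih => exact Step.appL (ih _)
  | appR _ ih => exact Step.appR (ih _)
  | pairL _ ih => exact Step.pairL (ih _)
  | pairR _ ih => exact Step.pairR (ih _)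
  | p1_cong _ ih => exact Step.p1_cong (ih _)
  | p2_cong _ ih => exact Step.p2_cong (ih _)

lemma steps_congr {f : Tm → Tm} (hf : ∀ {a b : Tm}, Step a b → Step (f a) (f b))
    {t t' : Tm} (h : Steps t t') : Steps (f t) (f t') := by
  induction h with
  | refl => exact Relation.ReflTransGen.refl
  | tail _ hst ih => exact Relation.ReflTransGen.tail ih (hf hst)

lemma steps_app {t t' s s' : Tm} (h1 : Steps t t') (h2 : Steps s s') :
    Steps (app t s) (app t' s') := by
  refine Relation.ReflTransGen.trans (steps_congr (fun hst => Step.appL hst) h1) ?_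
  exact steps_congr (fun hst => Step.appR hst) h2

lemma steps_subst_point {σ σ' : ℕ → Tm} (h : ∀ n, Steps (σ n) (σ' n)) (t : Tm) :
    Steps (subst σ t) (subst σ' t) := by
  induction t generalizing σ σ' with
  | var n => exact h n
  | lam t ih =>
      refine steps_congr (fun hst => Step.lam_cong hst) (ih ?_)
      intro n
      cases n with
      | zero => exact Relation.ReflTransGen.refl
      | succ n => exact steps_congr (fun hst => step_rename hst Nat.succ) (h n)
  | app t s iht ihs => exact steps_app (iht h) (ihs h)
  | pair t s iht ihs =>
      refine Relation.ReflTransGen.trans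
        (steps_congr (fun hst => Step.pairL hst) (iht h))
        (steps_congr (fun hst => Step.pairR hst) (ihs h))
  | p1 t ih => exact steps_congr (fun hst => Step.p1_cong hst) (ih h)
  | p2 t ih => exact steps_congr (fun hst => Step.p2_cong hst) (ih h)

lemma steps_subst1_arg (t : Tm) {s s' : Tm} (h : Step s s') :
    Steps (t.subst1 s) (t.subst1 s') := by
  refine steps_subst_point (fun n => ?_) t
  cases n with
  | zero => exact Relation.ReflTransGen.single h
  | succ n => exact Relation.ReflTransGen.refl

lemma SN.of_step {t t' : Tm} (h : SN t) (st : Step t t') : SN t' := h.inv st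

lemma SN.of_steps {t t' : Tm} (h : SN t) (st : Steps t t') : SN t' := by
  induction st with
  | refl => exact h
  | tail _ hst ih => exact ih.of_step hst

lemma sn_app_left {t s : Tm} (h : SN (app t s)) : SN t := by
  have key : ∀ u, SN u → ∀ t s : Tm, u = app t s → SN t := by
    intro u hu
    induction hu with
    | intro u _ ih =>
        intro t s he
        subst he
        exact Acc.intro _ (fun t' st => ih _ (Step.appL st) _ s rfl)
  exact key _ h t s rfl

lemma sn_p1_inv {t : Tm} (h : SN (p1 t)) : SN t := by
  have key : ∀ u, SN u → ∀ t : Tm, u = p1 t → SN t := by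
    intro u hu
    induction hu with
    | intro u _ ih =>
        intro t he
        subst he
        exact Acc.intro _ (fun t' st => ih _ (Step.p1_cong st) _ rfl)
  exact key _ h t rfl

lemma sn_of_subst1 {t s : Tm} (h : SN (t.subst1 s)) : SN t := by
  have key : ∀ u, SN u → ∀ t : Tm, u = t.subst1 s → SN t := by
    intro u hu
    induction hu with
    | intro u _ ih =>
        intro t he
        subst he
        exact Acc.intro _ (fun t' st => ih _ (step_subst st _) _ rfl)
  exact key _ h t rfl

lemma var_no_step {n : ℕ} {u : Tm} (h : Step (var n) u) : False := by cases h

end Tm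

open Tm in
lemma cr (A : Ty) :
    (∀ t, Red A t → SN t) ∧ (∀ t t', Red A t → Step t t' → Red A t') ∧
    (∀ t, Neutral t → (∀ t', Step t t' → Red A t') → Red A t) := by
  induction A with
  | base =>
      exact ⟨fun t h => h, fun t t' h st => h.inv st,
        fun t _ H => Acc.intro _ (fun t' st => H t' st)⟩
  | arr A B ihA ihB =>
      obtain ⟨cr1A, cr2A, cr3A⟩ := ihA
      obtain ⟨cr1B, cr2B, cr3B⟩ := ihB
      refine ⟨?_, ?_, ?_⟩
      · intro t h
        have hv : Red A (var 0) := cr3A _ trivial (fun t' st => absurd st var_no_step)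
        exact sn_app_left (cr1B _ (h (var 0) hv))
      · intro t t' h st s hs
        exact cr2B _ _ (h s hs) (Step.appL st)
      · intro t hnt H s hs
        have hsn : SN s := cr1A s hs
        revert hs
        induction hsn with
        | intro s hacc ih =>
            intro hs
            refine cr3B _ trivial (fun u hu => ?_)
            cases hu with
            | beta t0 => exact False.elim hnt
            | pairApp a b => exact False.elim hnt
            | appL st => exact H _ st s hs
            | appR st => exact ih _ st (cr2A _ _ hs st)
  | conj A B ihA ihB =>
      obtain ⟨cr1A, cr2A, cr3A⟩ := ihA
      obtain ⟨cr1B, cr2B, cr3B⟩ := ihB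
      refine ⟨?_, ?_, ?_⟩
      · intro t h
        exact sn_p1_inv (cr1A _ h.1)
      · intro t t' h st
        exact ⟨cr2A _ _ h.1 (Step.p1_cong st), cr2B _ _ h.2 (Step.p2_cong st)⟩
      · intro t hnt H
        constructor
        · refine cr3A _ trivial (fun u hu => ?_)
          cases hu with
          | proj1 a b => exact False.elim hnt
          | projLam1 t0 => exact False.elim hnt
          | p1_cong st => exact (H _ st).1
        · refine cr3B _ trivial (fun u hu => ?_)
          cases hu with
          | proj2 a b => exact False.elim hnt
          | projLam2 t0 => exact False.elim hnt
          | p2_cong st => exact (H _ st).2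

open Tm in
lemma red_step {A : Ty} {t t' : Tm} (h : Red A t) (st : Step t t') : Red A t' :=
  (cr A).2.1 t t' h st

open Tm in
lemma red_steps {A : Ty} {t t' : Tm} (h : Red A t) (st : Steps t t') : Red A t' := by
  induction st with
  | refl => exact h
  | tail _ hst ih => exact red_step ih hst

open Tm in
/-- Beta-expansion for reducibility. -/
lemma red_expand (B : Ty) : ∀ t : Tm, SN t → ∀ s : Tm, SN s →
    Red B (t.subst1 s) → Red B (Tm.app (Tm.lam t) s) := by
  intro t ht
  induction ht with
  | intro t _ iht =>
      intro s hs
      induction hs with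
      | intro s hacc ihs =>
          intro h
          refine (cr B).2.2 _ trivial (fun u hu => ?_)
          cases hu with
          | beta => exact h
          | appL st =>
              cases st with
              | lam_cong st' =>
                  exact iht _ st' s (Acc.intro s hacc) (red_step h (step_subst st' _))
          | appR st => exact ihs _ st (red_steps h (steps_subst1_arg t st))

open Tm in
lemma red_p1_pair (B : Ty) : ∀ P : Tm, SN P → ∀ Q : Tm, SN Q →
    Red B P → Red B (Tm.p1 (Tm.pair P Q)) := by
  intro P hP
  induction hP with
  | intro P _ ihP =>
      intro Q hQ
      induction hQ with
      | intro Q hQacc ihQ =>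
          intro h
          refine (cr B).2.2 _ trivial (fun u hu => ?_)
          cases hu with
          | proj1 => exact h
          | p1_cong st =>
              cases st with
              | pairL st' => exact ihP _ st' Q (Acc.intro Q hQacc) (red_step h st')
              | pairR st' => exact ihQ _ st' h

open Tm in
lemma red_p2_pair (B : Ty) : ∀ P : Tm, SN P → ∀ Q : Tm, SN Q →
    Red B Q → Red B (Tm.p2 (Tm.pair P Q)) := by
  intro P hP
  induction hP with
  | intro P _ ihP =>
      intro Q hQ
      induction hQ with
      | intro Q hQacc ihQ =>
          intro h
          refine (cr B).2.2 _ trivial (fun u hu => ?_)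
          cases hu with
          | proj2 => exact h
          | p2_cong st =>
              cases st with
              | pairL st' => exact ihP _ st' Q (Acc.intro Q hQacc) h
              | pairR st' => exact ihQ _ st' (red_step h st')

open Tm in
lemma red_fwd1 (B : Ty) : ∀ t : Tm, SN t → ∀ s : Tm, SN s →
    Red B (Tm.p1 (Tm.app t s)) → Red B (Tm.app (Tm.p1 t) s) := by
  intro t ht
  induction ht with
  | intro t _ iht =>
      intro s hs
      induction hs with
      | intro s hacc ihs =>
          intro h
          refine (cr B).2.2 _ trivial (fun u hu => ?_)
          cases hu with
          | @appL _ tL _ st =>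
              cases st with
              | proj1 a b =>
                  exact red_step (red_step h (Step.p1_cong (Step.pairApp tL b s)))
                    (Step.proj1 _ _)
              | projLam1 u0 =>
                  have hred : Red B ((Tm.p1 u0).subst1 s) :=
                    red_step h (Step.p1_cong (Step.beta u0 s))
                  exact red_expand B (Tm.p1 u0) (sn_of_subst1 ((cr B).1 _ hred))
                    s (Acc.intro s hacc) hred
              | p1_cong st' =>
                  exact iht _ st' s (Acc.intro s hacc)
                    (red_step h (Step.p1_cong (Step.appL st')))
          | appR st =>
              exact ihs _ st (red_step h (Step.p1_cong (Step.appR st)))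

open Tm in
lemma red_fwd2 (B : Ty) : ∀ t : Tm, SN t → ∀ s : Tm, SN s →
    Red B (Tm.p2 (Tm.app t s)) → Red B (Tm.app (Tm.p2 t) s) := by
  intro t ht
  induction ht with
  | intro t _ iht =>
      intro s hs
      induction hs with
      | intro s hacc ihs =>
          intro h
          refine (cr B).2.2 _ trivial (fun u hu => ?_)
          cases hu with
          | @appL _ tL _ st =>
              cases st with
              | proj2 a b =>
                  exact red_step (red_step h (Step.p2_cong (Step.pairApp a tL s)))
                    (Step.proj2 _ _)
              | projLam2 u0 =>
                  have hred : Red B ((Tm.p2 u0).subst1 s) :=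
                    red_step h (Step.p2_cong (Step.beta u0 s))
                  exact red_expand B (Tm.p2 u0) (sn_of_subst1 ((cr B).1 _ hred))
                    s (Acc.intro s hacc) hred
              | p2_cong st' =>
                  exact iht _ st' s (Acc.intro s hacc)
                    (red_step h (Step.p2_cong (Step.appL st')))
          | appR st =>
              exact ihs _ st (red_step h (Step.p2_cong (Step.appR st)))

open Tm in
lemma red_rev1 (B C : Ty) : ∀ t : Tm, SN t → ∀ s : Tm, SN s →
    Red B (Tm.app (Tm.p1 t) s) → Red C (Tm.app (Tm.p2 t) s) →
    Red B (Tm.p1 (Tm.app t s)) := by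
  intro t ht
  induction ht with
  | intro t _ iht =>
      intro s hs
      induction hs with
      | intro s hacc ihs =>
          intro h1 h2
          refine (cr B).2.2 _ trivial (fun u hu => ?_)
          cases hu with
          | p1_cong st =>
              cases st with
              | beta t0 =>
                  exact red_step (red_step h1 (Step.appL (Step.projLam1 t0)))
                    (Step.beta _ _)
              | pairApp a b =>
                  have hAs : Red B (Tm.app a s) := red_step h1 (Step.appL (Step.proj1 a b))
                  have hBs : Red C (Tm.app b s) := red_step h2 (Step.appL (Step.proj2 a b))
                  exact red_p1_pair B _ ((cr B).1 _ hAs) _ ((cr C).1 _ hBs) hAs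
              | appL st' =>
                  exact iht _ st' s (Acc.intro s hacc)
                    (red_step h1 (Step.appL (Step.p1_cong st')))
                    (red_step h2 (Step.appL (Step.p2_cong st')))
              | appR st' =>
                  exact ihs _ st' (red_step h1 (Step.appR st'))
                    (red_step h2 (Step.appR st'))

open Tm in
lemma red_rev2 (B C : Ty) : ∀ t : Tm, SN t → ∀ s : Tm, SN s →
    Red B (Tm.app (Tm.p1 t) s) → Red C (Tm.app (Tm.p2 t) s) →
    Red C (Tm.p2 (Tm.app t s)) := by
  intro t ht
  induction ht with
  | intro t _ iht =>
      intro s hs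
      induction hs with
      | intro s hacc ihs =>
          intro h1 h2
          refine (cr C).2.2 _ trivial (fun u hu => ?_)
          cases hu with
          | p2_cong st =>
              cases st with
              | beta t0 =>
                  exact red_step (red_step h2 (Step.appL (Step.projLam2 t0)))
                    (Step.beta _ _)
              | pairApp a b =>
                  have hAs : Red B (Tm.app a s) := red_step h1 (Step.appL (Step.proj1 a b))
                  have hBs : Red C (Tm.app b s) := red_step h2 (Step.appL (Step.proj2 a b))
                  exact red_p2_pair C _ ((cr B).1 _ hAs) _ ((cr C).1 _ hBs) hBs
              | appL st' =>
                  exact iht _ st' s (Acc.intro s hacc)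
                    (red_step h1 (Step.appL (Step.p1_cong st')))
                    (red_step h2 (Step.appL (Step.p2_cong st')))
              | appR st' =>
                  exact ihs _ st' (red_step h1 (Step.appR st'))
                    (red_step h2 (Step.appR st'))

open Tm in
lemma red_distr (A B₁ B₂ : Ty) (t : Tm) :
    Red (Ty.arr A (Ty.conj B₁ B₂)) t ↔ Red (Ty.conj (Ty.arr A B₁) (Ty.arr A B₂)) t := by
  constructor
  · intro h
    have ht : SN t := (cr (Ty.arr A (Ty.conj B₁ B₂))).1 t h
    constructor
    · intro s hs
      exact red_fwd1 B₁ t ht s ((cr A).1 s hs) (h s hs).1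
    · intro s hs
      exact red_fwd2 B₂ t ht s ((cr A).1 s hs) (h s hs).2
  · intro h
    have ht : SN t := (cr (Ty.conj (Ty.arr A B₁) (Ty.arr A B₂))).1 t h
    intro s hs
    have hs' : SN s := (cr A).1 s hs
    exact ⟨red_rev1 B₁ B₂ t ht s hs' (h.1 s hs) (h.2 s hs),
      red_rev2 B₁ B₂ t ht s hs' (h.1 s hs) (h.2 s hs)⟩

theorem red_stability :
    (∀ (A B₁ B₂ : Ty) (t : Tm),
      Red (Ty.arr A (Ty.conj B₁ B₂)) t ↔ Red (Ty.conj (Ty.arr A B₁) (Ty.arr A B₂)) t) ∧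
    (∀ (A B : Ty), Iso A B → ∀ t : Tm, Red A t ↔ Red B t) := by
  refine ⟨red_distr, ?_⟩
  intro A B hiso
  induction hiso with
  | refl A => exact fun t => Iff.rfl
  | symm _ ih => exact fun t => (ih t).symm
  | trans _ _ ih1 ih2 => exact fun t => (ih1 t).trans (ih2 t)
  | distr A B C => exact red_distr A B C
  | arrL B _ ih =>
      intro t
      exact ⟨fun h s hs => h s ((ih s).mpr hs), fun h s hs => h s ((ih s).mp hs)⟩
  | arrR A _ ih =>
      intro t
      exact ⟨fun h s hs => (ih _).mp (h s hs), fun h s hs => (ih _).mpr (h s hs)⟩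
  | conjL B _ ih =>
      intro t
      exact ⟨fun h => ⟨(ih _).mp h.1, h.2⟩, fun h => ⟨(ih _).mpr h.1, h.2⟩⟩
  | conjR A _ ih =>
      intro t
      exact ⟨fun h => ⟨h.1, (ih _).mp h.2⟩, fun h => ⟨h.1, (ih _).mpr h.2⟩⟩
end
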